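/- arXiv:2104.12762 — 7 statements merged into one kernel-verified Lean document; each statement's English description precedes it below -/
import Mathlib

section
/- Let k1, k2, f_c > 0, let χ ∈ (0,1), let γ, ψ, α, β, φ be real exponents, and set a1 = γ − αψ, a2 = 1 − αβ, a4 = αφ with a2 ≠ 0 and a1 ≠ a2. Define D_c(P) = (k1 · k2^α · P^{−a1} · χ^{a4})^{1/a2} and π_i(P) = (P·(1−χ) − f_c) · D_c(P) for P > 0, and let P* = a1·f_c / ((a1 − a2)·(1 − χ)). If a1/(a1 − a2) > 0 (so that P* > 0), then the derivative of π_i vanishes at P*: π_i'(P*) = 0. -/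
/-- the derivative of the service provider payoff vanishes at the
candidate best-response price P* = a1·f_c/((a1 − a2)·(1 − χ)). -/
theorem stmt_4 (k1 k2 fc χ γ ψ α β φ a1 a2 a4 : ℝ)
    (hk1 : 0 < k1) (hk2 : 0 < k2) (hfc : 0 < fc) (hχ : χ ∈ Set.Ioo (0 : ℝ) 1)
    (ha1 : a1 = γ - α * ψ) (ha2 : a2 = 1 - α * β) (ha4 : a4 = α * φ)
    (ha2ne : a2 ≠ 0) (ha1a2 : a1 ≠ a2)
    (hpos : 0 < a1 / (a1 - a2)) :
    HasDerivAt
      (fun Q : ℝ => (Q * (1 - χ) - fc) * (k1 * k2 ^ α * Q ^ (-a1) * χ ^ a4) ^ (1 / a2))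
      0 (a1 * fc / ((a1 - a2) * (1 - χ))) := by
  obtain ⟨hχ0, hχ1⟩ := hχ
  have h1χ : 0 < 1 - χ := by linarith
  have hda : a1 - a2 ≠ 0 := sub_ne_zero.mpr ha1a2
  set P : ℝ := a1 * fc / ((a1 - a2) * (1 - χ)) with hPdef
  have hP : 0 < P := by
    have : P = (a1 / (a1 - a2)) * (fc / (1 - χ)) := by
      rw [hPdef, div_mul_div_comm]
    rw [this]
    exact mul_pos hpos (div_pos hfc h1χ)
  set C : ℝ := k1 * k2 ^ α * χ ^ a4 with hCdef
  have hC : 0 < C := mul_pos (mul_pos hk1 (Real.rpow_pos_of_pos hk2 α)) (Real.rpow_pos_of_pos hχ0 a4)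
  -- derivative of the simplified function
  have h1 : HasDerivAt (fun Q : ℝ => Q * (1 - χ) - fc) (1 - χ) P := by
    simpa using ((hasDerivAt_id P).mul_const (1 - χ)).sub_const fc
  have h2 : HasDerivAt (fun Q : ℝ => Q ^ (-a1 / a2)) ((-a1 / a2) * P ^ (-a1 / a2 - 1)) P :=
    Real.hasDerivAt_rpow_const (Or.inl hP.ne')
  have hg : HasDerivAt
      (fun Q : ℝ => (Q * (1 - χ) - fc) * (C ^ (1 / a2) * Q ^ (-a1 / a2)))
      ((1 - χ) * (C ^ (1 / a2) * P ^ (-a1 / a2)) +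
        (P * (1 - χ) - fc) * (C ^ (1 / a2) * ((-a1 / a2) * P ^ (-a1 / a2 - 1)))) P :=
    h1.mul (h2.const_mul _)
  have hsplit : P ^ (-a1 / a2) = P ^ (-a1 / a2 - 1) * P := by
    calc P ^ (-a1 / a2) = P ^ (-a1 / a2 - 1 + 1) := by norm_num
      _ = P ^ (-a1 / a2 - 1) * P ^ (1 : ℝ) := Real.rpow_add hP _ _
      _ = P ^ (-a1 / a2 - 1) * P := by rw [Real.rpow_one]
  have hzero : (1 - χ) * (C ^ (1 / a2) * P ^ (-a1 / a2)) +
      (P * (1 - χ) - fc) * (C ^ (1 / a2) * ((-a1 / a2) * P ^ (-a1 / a2 - 1))) = 0 := by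
    rw [hsplit]
    have hPval : P * ((a1 - a2) * (1 - χ)) = a1 * fc := by
      rw [hPdef]; field_simp
    have key : (1 - χ) * P + (P * (1 - χ) - fc) * (-a1 / a2) = 0 := by
      have : ((1 - χ) * P + (P * (1 - χ) - fc) * (-a1 / a2)) * ((a1 - a2) * a2) = 0 := by
        have expand : ((1 - χ) * P + (P * (1 - χ) - fc) * (-a1 / a2)) * ((a1 - a2) * a2)
            = (P * ((a1 - a2) * (1 - χ))) * a2 - a1 * (P * ((a1 - a2) * (1 - χ))) + a1 * fc * (a1 - a2) := by
          field_simp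
          ring
        rw [expand, hPval]; ring
      have hne : (a1 - a2) * a2 ≠ 0 := mul_ne_zero hda ha2ne
      exact (mul_eq_zero.mp this).resolve_right hne
    calc (1 - χ) * (C ^ (1 / a2) * (P ^ (-a1 / a2 - 1) * P)) +
        (P * (1 - χ) - fc) * (C ^ (1 / a2) * (-a1 / a2 * P ^ (-a1 / a2 - 1)))
        = C ^ (1 / a2) * P ^ (-a1 / a2 - 1) *
            ((1 - χ) * P + (P * (1 - χ) - fc) * (-a1 / a2)) := by ring
      _ = 0 := by rw [key, mul_zero]
  rw [← hzero]
  refine hg.congr_of_eventuallyEq ?_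
  filter_upwards [Ioi_mem_nhds hP] with Q hQ
  have hQ0 : 0 < Q := hQ
  have : k1 * k2 ^ α * Q ^ (-a1) * χ ^ a4 = C * Q ^ (-a1) := by rw [hCdef]; ring
  rw [this, Real.mul_rpow hC.le (Real.rpow_nonneg hQ0.le _),
    ← Real.rpow_mul hQ0.le, show (-a1) * (1 / a2) = -a1 / a2 by ring]
end

section
/- Let k1, k2, f_c > 0, let χ ∈ (0,1), let γ, ψ, α, β, φ be real exponents, and set a1 = γ − αψ, a2 = 1 − αβ, a4 = αφ with a2 ≠ 0 and a1/(a1 − a2) > 0. Define D_c(P) = (k1 · k2^α · P^{−a1} · χ^{a4})^{1/a2}, π_i(P) = (P·(1−χ) − f_c) · D_c(P) for P > 0, and P* = a1·f_c / ((a1 − a2)·(1 − χ)). Then the second derivative of π_i at P* equals (D_c(P*)/P*) · (1 − a1/a2) · (1 − χ); in particular π_i''(P*) < 0 if and only if a1/a2 > 1. -/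
/-- the second derivative of the service provider payoff at
P* equals (D_c(P*)/P*)·(1 − a1/a2)·(1 − χ); in particular it is negative iff
a1/a2 > 1. -/
theorem stmt_5 (k1 k2 fc χ γ ψ α β φ a1 a2 a4 : ℝ)
    (hk1 : 0 < k1) (hk2 : 0 < k2) (hfc : 0 < fc) (hχ : χ ∈ Set.Ioo (0 : ℝ) 1)
    (ha1 : a1 = γ - α * ψ) (ha2 : a2 = 1 - α * β) (ha4 : a4 = α * φ)
    (ha2ne : a2 ≠ 0) (hpos : 0 < a1 / (a1 - a2)) :
    let Pstar : ℝ := a1 * fc / ((a1 - a2) * (1 - χ))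
    let Dc : ℝ → ℝ := fun Q => (k1 * k2 ^ α * Q ^ (-a1) * χ ^ a4) ^ (1 / a2)
    let pi_i : ℝ → ℝ := fun Q => (Q * (1 - χ) - fc) * Dc Q
    deriv (deriv pi_i) Pstar = Dc Pstar / Pstar * (1 - a1 / a2) * (1 - χ) ∧
      (deriv (deriv pi_i) Pstar < 0 ↔ 1 < a1 / a2) := by
  obtain ⟨hχ0, hχ1⟩ := hχ
  intro Pstar Dc pi_i
  have h1χ : 0 < 1 - χ := by linarith
  have ha1ne : a1 ≠ 0 := by
    intro h; rw [h] at hpos; simp at hpos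
  have hdne : a1 - a2 ≠ 0 := by
    intro h; rw [h] at hpos; simp at hpos
  have hP : 0 < Pstar := by
    have h : Pstar = a1 / (a1 - a2) * (fc / (1 - χ)) := by
      show a1 * fc / ((a1 - a2) * (1 - χ)) = _
      rw [div_mul_div_comm]
    rw [h]; exact mul_pos hpos (div_pos hfc h1χ)
  set b := a1 / a2 with hb
  have hbne : b ≠ 0 := div_ne_zero ha1ne ha2ne
  have hfcb : fc * a1 = Pstar * (1 - χ) * (a1 - a2) := by
    show fc * a1 = a1 * fc / ((a1 - a2) * (1 - χ)) * (1 - χ) * (a1 - a2)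
    field_simp
  have hfcb' : fc * b = Pstar * (1 - χ) * (b - 1) := by
    rw [hb]
    field_simp
    linear_combination hfcb
  set K := (k1 * k2 ^ α * χ ^ a4) ^ (1 / a2) with hK
  have hKpos : 0 < K := Real.rpow_pos_of_pos (by positivity) _
  have hDc : ∀ Q : ℝ, 0 < Q → Dc Q = K * Q ^ (-b) := by
    intro Q hQ
    show (k1 * k2 ^ α * Q ^ (-a1) * χ ^ a4) ^ (1 / a2) = _
    have h1 : k1 * k2 ^ α * Q ^ (-a1) * χ ^ a4 = (k1 * k2 ^ α * χ ^ a4) * Q ^ (-a1) := by ring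
    rw [h1, Real.mul_rpow (by positivity) (by positivity), ← Real.rpow_mul hQ.le,
      show -a1 * (1 / a2) = -b by rw [hb]; ring]
  set F : ℝ → ℝ := fun Q => K * ((1 - χ) * Q ^ (1 - b) - fc * Q ^ (-b)) with hF
  have hpiF : ∀ Q ∈ Set.Ioi (0 : ℝ), pi_i Q = F Q := by
    intro Q hQ
    have hQ' : (0 : ℝ) < Q := hQ
    show (Q * (1 - χ) - fc) * Dc Q = _
    rw [hDc Q hQ']
    simp only [hF]
    have h2 : Q ^ (1 - b) = Q * Q ^ (-b) := by
      rw [show (1 : ℝ) - b = 1 + -b by ring, Real.rpow_add hQ', Real.rpow_one]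
    rw [h2]; ring
  set G : ℝ → ℝ := fun Q => K * ((1 - χ) * ((1 - b) * Q ^ (1 - b - 1)) - fc * (-b * Q ^ (-b - 1))) with hG
  have hFG : ∀ Q ∈ Set.Ioi (0 : ℝ), HasDerivAt F (G Q) Q := by
    intro Q hQ
    have hQ' : (0 : ℝ) < Q := hQ
    have h1 : HasDerivAt (fun x : ℝ => x ^ (1 - b)) ((1 - b) * Q ^ (1 - b - 1)) Q :=
      Real.hasDerivAt_rpow_const (Or.inl hQ'.ne')
    have h2 : HasDerivAt (fun x : ℝ => x ^ (-b)) (-b * Q ^ (-b - 1)) Q :=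
      Real.hasDerivAt_rpow_const (Or.inl hQ'.ne')
    exact (((h1.const_mul (1 - χ)).sub (h2.const_mul fc)).const_mul K)
  have hG' : HasDerivAt G
      (K * ((1 - χ) * ((1 - b) * ((1 - b - 1) * Pstar ^ (1 - b - 1 - 1))) -
        fc * (-b * ((-b - 1) * Pstar ^ (-b - 1 - 1))))) Pstar := by
    have h1 : HasDerivAt (fun x : ℝ => x ^ (1 - b - 1)) ((1 - b - 1) * Pstar ^ (1 - b - 1 - 1)) Pstar :=
      Real.hasDerivAt_rpow_const (Or.inl hP.ne')
    have h2 : HasDerivAt (fun x : ℝ => x ^ (-b - 1)) ((-b - 1) * Pstar ^ (-b - 1 - 1)) Pstar :=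
      Real.hasDerivAt_rpow_const (Or.inl hP.ne')
    exact ((((h1.const_mul (1 - b)).const_mul (1 - χ)).sub
      ((h2.const_mul (-b)).const_mul fc)).const_mul K)
  have hmem : Set.Ioi (0 : ℝ) ∈ nhds Pstar := isOpen_Ioi.mem_nhds hP
  have hev : pi_i =ᶠ[nhds Pstar] F := Filter.eventuallyEq_of_mem hmem hpiF
  have hev1 : deriv pi_i =ᶠ[nhds Pstar] deriv F := hev.deriv
  have hev2 : deriv F =ᶠ[nhds Pstar] G := by
    filter_upwards [hmem] with Q hQ
    exact (hFG Q hQ).deriv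
  have hkey : deriv (deriv pi_i) Pstar = deriv G Pstar := (hev1.trans hev2).deriv_eq
  have e0 : Pstar ^ (1 - b - 1 - 1) = Pstar ^ (-b - 1 - 1) * Pstar := by
    rw [← Real.rpow_add_one hP.ne']
    congr 1; ring
  have e1 : Pstar ^ (-b) = Pstar ^ (-b - 1 - 1) * Pstar * Pstar := by
    rw [← Real.rpow_add_one hP.ne', ← Real.rpow_add_one hP.ne']
    congr 1; ring
  set X := Pstar ^ (-b - 1 - 1) with hX
  have hXpos : 0 < X := Real.rpow_pos_of_pos hP _
  have hEq : deriv (deriv pi_i) Pstar = Dc Pstar / Pstar * (1 - b) * (1 - χ) := by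
    rw [hkey, hG'.deriv, hDc Pstar hP, e0, e1, mul_div_assoc,
      mul_div_cancel_right₀ _ hP.ne']
    linear_combination (-(K * (b + 1) * X)) * hfcb'
  refine ⟨hEq, ?_⟩
  rw [hEq]
  have hDP : 0 < Dc Pstar / Pstar := by
    rw [hDc Pstar hP]
    positivity
  constructor <;> intro h <;> nlinarith [mul_pos hDP h1χ]
end

section
/- Let k1, k2, f_c > 0, let χ ∈ (0,1), let γ, ψ, α, β, φ be real exponents, and set a1 = γ − αψ, a2 = 1 − αβ, a4 = αφ. Assume a2 > 0 and a1 > a2 (so in particular a1/a2 > 1 and a1/(a1 − a2) > 0). Define D_c(P) = (k1 · k2^α · P^{−a1} · χ^{a4})^{1/a2}, π_i(P) = (P·(1−χ) − f_c) · D_c(P) for P > 0, and P* = a1·f_c / ((a1 − a2)·(1 − χ)). Then P* is the unique global maximizer of π_i on (0, ∞): for every P > 0 with P ≠ P*, π_i(P) < π_i(P*). -/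
/-- under a2 > 0 and a1 > a2, the price
P* = a1·f_c/((a1 − a2)·(1 − χ)) is the unique global maximizer of the service
provider payoff on (0, ∞). -/
theorem stmt_6 (k1 k2 fc χ γ ψ α β φ a1 a2 a4 : ℝ)
    (hk1 : 0 < k1) (hk2 : 0 < k2) (hfc : 0 < fc) (hχ : χ ∈ Set.Ioo (0 : ℝ) 1)
    (ha1 : a1 = γ - α * ψ) (ha2 : a2 = 1 - α * β) (ha4 : a4 = α * φ)
    (ha2pos : 0 < a2) (ha1a2 : a2 < a1) :
    let Pstar : ℝ := a1 * fc / ((a1 - a2) * (1 - χ))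
    let pi_i : ℝ → ℝ :=
      fun Q => (Q * (1 - χ) - fc) * (k1 * k2 ^ α * Q ^ (-a1) * χ ^ a4) ^ (1 / a2)
    ∀ P : ℝ, 0 < P → P ≠ Pstar → pi_i P < pi_i Pstar := by
  intro Pstar pi_i P hP hPne
  obtain ⟨hχ0, hχ1⟩ := hχ
  have h1χ : 0 < 1 - χ := by linarith
  have ha1pos : 0 < a1 := lt_trans ha2pos ha1a2
  have hd : 0 < a1 - a2 := by linarith
  have hPstar : 0 < Pstar := by
    have : 0 < a1 * fc / ((a1 - a2) * (1 - χ)) := by positivity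
    simpa [Pstar] using this
  set r := a1 / a2 with hr
  have hr1 : 1 < r := (one_lt_div ha2pos).2 ha1a2
  set C := (k1 * k2 ^ α * χ ^ a4) ^ (1 / a2) with hCdef
  have hC : 0 < C := by positivity
  have key : ∀ Q : ℝ, 0 < Q →
      pi_i Q = (Q * (1 - χ) - fc) * (C * Q ^ (-r)) := by
    intro Q hQ
    show (Q * (1 - χ) - fc) * (k1 * k2 ^ α * Q ^ (-a1) * χ ^ a4) ^ (1 / a2) = _
    congr 1
    rw [show k1 * k2 ^ α * Q ^ (-a1) * χ ^ a4
        = (k1 * k2 ^ α * χ ^ a4) * Q ^ (-a1) by ring,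
      Real.mul_rpow (by positivity) (by positivity), ← Real.rpow_mul hQ.le]
    congr 1
    rw [hr]; ring
  -- t = P / Pstar
  set t := P / Pstar with ht
  have htpos : 0 < t := div_pos hP hPstar
  have htne : t ≠ 1 := by
    intro h
    exact hPne (by rw [ht, div_eq_one_iff_eq hPstar.ne'] at h; linarith)
  have hBern : 1 + r * (t - 1) < t ^ r := by
    have := one_add_mul_self_lt_rpow_one_add (s := t - 1) (by linarith) (by
      intro h; exact htne (by linarith)) hr1
    simpa using this
  set A := Pstar * (1 - χ) with hA
  have hAval : A = a1 * fc / (a1 - a2) := by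
    rw [hA]; show a1 * fc / ((a1 - a2) * (1 - χ)) * (1 - χ) = _
    field_simp
  have hAfc : 0 < A - fc := by
    have h : A - fc = a2 * fc / (a1 - a2) := by rw [hAval]; field_simp; ring
    rw [h]; positivity
  have hEq : (A - fc) * (1 + r * (t - 1)) = t * A - fc := by
    rw [hAval, hr]
    field_simp
    ring
  have hu : (0:ℝ) < t ^ r := Real.rpow_pos_of_pos htpos r
  have hv : (0:ℝ) < t ^ (-r) := Real.rpow_pos_of_pos htpos (-r)
  have huv : t ^ r * t ^ (-r) = 1 := by
    rw [← Real.rpow_add htpos]; simp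
  have hstep : t * A - fc < (A - fc) * t ^ r := by
    calc t * A - fc = (A - fc) * (1 + r * (t - 1)) := hEq.symm
    _ < (A - fc) * t ^ r := by
        exact mul_lt_mul_of_pos_left hBern hAfc
  have hstep2 : (t * A - fc) * t ^ (-r) < A - fc := by
    have := mul_lt_mul_of_pos_right hstep hv
    calc (t * A - fc) * t ^ (-r) < (A - fc) * t ^ r * t ^ (-r) := this
    _ = A - fc := by rw [mul_assoc, huv, mul_one]
  rw [key P hP, key Pstar hPstar]
  have hPt : P = t * Pstar := by rw [ht, div_mul_cancel₀ P hPstar.ne']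
  have hPr : P ^ (-r) = t ^ (-r) * Pstar ^ (-r) := by
    rw [hPt, Real.mul_rpow htpos.le hPstar.le]
  have hPsr : (0:ℝ) < Pstar ^ (-r) := Real.rpow_pos_of_pos hPstar (-r)
  rw [hPr, hPt]
  have : (t * Pstar * (1 - χ) - fc) * t ^ (-r) < Pstar * (1 - χ) - fc := by
    have : t * Pstar * (1 - χ) - fc = t * A - fc := by rw [hA]; ring
    rw [this, ← hA]; exact hstep2
  calc (t * Pstar * (1 - χ) - fc) * (C * (t ^ (-r) * Pstar ^ (-r)))
      = ((t * Pstar * (1 - χ) - fc) * t ^ (-r)) * (C * Pstar ^ (-r)) := by ring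
    _ < (Pstar * (1 - χ) - fc) * (C * Pstar ^ (-r)) := by
        exact mul_lt_mul_of_pos_right this (by positivity)
end

section
/- Let k1, k2, f_c > 0, let χ ∈ (0,1), let γ, ψ, α, β, φ be real exponents, and set a1 = γ − αψ, a2 = 1 − αβ, a4 = αφ. Assume a2 > 0 and a1 > a2. Define D_c(P) = (k1 · k2^α · P^{−a1} · χ^{a4})^{1/a2}, π_i(P) = (P·(1−χ) − f_c) · D_c(P) for P > 0, and P* = a1·f_c / ((a1 − a2)·(1 − χ)). Then π_i is strictly monotone increasing on the interval (0, P*] and strictly monotone decreasing on the interval [P*, ∞). -/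
/-- under a2 > 0 and a1 > a2, the service provider payoff is
strictly increasing on (0, P*] and strictly decreasing on [P*, ∞). -/
theorem stmt_7 (k1 k2 fc χ γ ψ α β φ a1 a2 a4 : ℝ)
    (hk1 : 0 < k1) (hk2 : 0 < k2) (hfc : 0 < fc) (hχ : χ ∈ Set.Ioo (0 : ℝ) 1)
    (ha1 : a1 = γ - α * ψ) (ha2 : a2 = 1 - α * β) (ha4 : a4 = α * φ)
    (ha2pos : 0 < a2) (ha1a2 : a2 < a1) :
    let Pstar : ℝ := a1 * fc / ((a1 - a2) * (1 - χ))
    let pi_i : ℝ → ℝ :=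
      fun Q => (Q * (1 - χ) - fc) * (k1 * k2 ^ α * Q ^ (-a1) * χ ^ a4) ^ (1 / a2)
    StrictMonoOn pi_i (Set.Ioc 0 Pstar) ∧ StrictAntiOn pi_i (Set.Ici Pstar) := by
  obtain ⟨hχ0, hχ1⟩ := hχ
  have h1χ : (0:ℝ) < 1 - χ := by linarith
  intro Pstar pi_i
  set s : ℝ := a1 / a2 with hs_def
  have ha2ne : a2 ≠ 0 := ne_of_gt ha2pos
  have hs1 : 1 < s := (one_lt_div ha2pos).mpr ha1a2
  have ha1pos : 0 < a1 := lt_trans ha2pos ha1a2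
  set C : ℝ := (k1 * k2 ^ α * χ ^ a4) ^ (1 / a2) with hC_def
  have hCpos : 0 < C := Real.rpow_pos_of_pos (by positivity) _
  set g : ℝ → ℝ := fun Q => (Q * (1 - χ) - fc) * (C * Q ^ (-s)) with hg_def
  have heq : ∀ Q : ℝ, 0 < Q → pi_i Q = g Q := by
    intro Q hQ
    have h1 : k1 * k2 ^ α * Q ^ (-a1) * χ ^ a4 = (k1 * k2 ^ α * χ ^ a4) * Q ^ (-a1) := by
      ring
    have h2 : ((k1 * k2 ^ α * χ ^ a4) * Q ^ (-a1)) ^ (1/a2)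
        = C * (Q ^ (-a1)) ^ (1/a2) := by
      rw [Real.mul_rpow (by positivity) (le_of_lt (Real.rpow_pos_of_pos hQ _))]
    have h3 : (Q ^ (-a1)) ^ (1/a2) = Q ^ (-s) := by
      rw [← Real.rpow_mul hQ.le]
      congr 1
      field_simp [hs_def]
      rw [hs_def]; field_simp
    simp only [pi_i, g]
    rw [h1, h2, h3]
  have hderiv : ∀ Q : ℝ, 0 < Q →
      HasDerivAt g (C * Q ^ (-s - 1) * ((1 - χ) * (1 - s) * Q + fc * s)) Q := by
    intro Q hQ
    have hQne : Q ≠ 0 := ne_of_gt hQ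
    have h1 : HasDerivAt (fun Q : ℝ => Q * (1 - χ) - fc) (1 - χ) Q := by
      simpa using ((hasDerivAt_id Q).mul_const (1 - χ)).sub_const fc
    have h2 : HasDerivAt (fun Q : ℝ => C * Q ^ (-s)) (C * (-s * Q ^ (-s - 1))) Q := by
      simpa using (Real.hasDerivAt_rpow_const (p := -s) (Or.inl hQne)).const_mul C
    have h3 := h1.mul h2
    refine h3.congr_deriv ?_
    have hpow : Q ^ (-s) = Q ^ (-s - 1) * Q := by
      rw [← Real.rpow_add_one hQne]
      norm_num
    rw [hpow]; ring
  have hderiv_pi : ∀ Q : ℝ, 0 < Q →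
      HasDerivAt pi_i (C * Q ^ (-s - 1) * ((1 - χ) * (1 - s) * Q + fc * s)) Q := by
    intro Q hQ
    refine (hderiv Q hQ).congr_of_eventuallyEq ?_
    filter_upwards [Ioi_mem_nhds hQ] with x hx
    exact heq x hx
  have hcont : ∀ Q : ℝ, 0 < Q → ContinuousAt pi_i Q :=
    fun Q hQ => (hderiv_pi Q hQ).continuousAt
  have hPpos : 0 < Pstar :=
    div_pos (mul_pos ha1pos hfc) (mul_pos (by linarith) h1χ)
  have hzero : (1 - χ) * (1 - s) * Pstar + fc * s = 0 := by
    show (1 - χ) * (1 - s) * (a1 * fc / ((a1 - a2) * (1 - χ))) + fc * s = 0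
    rw [hs_def]
    have h12 : a1 - a2 ≠ 0 := sub_ne_zero.mpr (ne_of_gt ha1a2)
    field_simp
    ring
  have hc : (1 - χ) * (1 - s) < 0 := mul_neg_of_pos_of_neg h1χ (by linarith)
  constructor
  · apply strictMonoOn_of_deriv_pos (convex_Ioc 0 Pstar)
      (fun Q hQ => (hcont Q hQ.1).continuousWithinAt)
    intro Q hQ
    rw [interior_Ioc] at hQ
    rw [(hderiv_pi Q hQ.1).deriv]
    have h2 := mul_lt_mul_of_neg_left hQ.2 hc
    have hX : 0 < (1 - χ) * (1 - s) * Q + fc * s := by linarith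
    exact mul_pos (mul_pos hCpos (Real.rpow_pos_of_pos hQ.1 _)) hX
  · apply strictAntiOn_of_deriv_neg (convex_Ici Pstar)
      (fun Q hQ => (hcont Q (lt_of_lt_of_le hPpos hQ)).continuousWithinAt)
    intro Q hQ
    rw [interior_Ici] at hQ
    have hQ0 : 0 < Q := lt_trans hPpos hQ
    rw [(hderiv_pi Q hQ0).deriv]
    have h2 := mul_lt_mul_of_neg_left hQ hc
    have hX : (1 - χ) * (1 - s) * Q + fc * s < 0 := by linarith
    exact mul_neg_of_pos_of_neg (mul_pos hCpos (Real.rpow_pos_of_pos hQ0 _)) hX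
end

section
/- Let k1, k2, f_s, φ > 0, let γ, ψ, α, β be real exponents, and set a1 = γ − αψ, a2 = 1 − αβ, a3 = ψ − γβ, a4 = αφ with a2 ≠ 0 and a4 + a2 ≠ 0. Fix P > 0 and define the cloud payoff as a function of χ > 0 by π(χ) = (k1·k2^α)^{1/a2} · P^{1 − a1/a2} · χ^{a4/a2 + 1} − f_s · (k2·k1^β)^{1/a2} · P^{a3/a2} · χ^{φ/a2}. Then for χ > 0, the derivative of π vanishes at χ if and only if χ^{(a4 − φ)/a2 + 1} = f_s · (φ/(a4 + a2)) · ((k2·k1^β)/(k1·k2^α))^{1/a2} · P^{(a1 + a3)/a2 − 1}. -/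
/-- the derivative of the cloud payoff (as a function of the
revenue portion χ) vanishes at χ > 0 iff χ satisfies the first-order
condition. -/
theorem stmt_9 (k1 k2 fs φ P γ ψ α β a1 a2 a3 a4 : ℝ)
    (hk1 : 0 < k1) (hk2 : 0 < k2) (hfs : 0 < fs) (hφ : 0 < φ) (hP : 0 < P)
    (ha1 : a1 = γ - α * ψ) (ha2 : a2 = 1 - α * β)
    (ha3 : a3 = ψ - γ * β) (ha4 : a4 = α * φ)
    (ha2ne : a2 ≠ 0) (ha42 : a4 + a2 ≠ 0) :
    ∀ χ : ℝ, 0 < χ →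
      (deriv
          (fun x : ℝ =>
            (k1 * k2 ^ α) ^ (1 / a2) * P ^ (1 - a1 / a2) * x ^ (a4 / a2 + 1) -
              fs * (k2 * k1 ^ β) ^ (1 / a2) * P ^ (a3 / a2) * x ^ (φ / a2)) χ = 0 ↔
        χ ^ ((a4 - φ) / a2 + 1) =
          fs * (φ / (a4 + a2)) * ((k2 * k1 ^ β) / (k1 * k2 ^ α)) ^ (1 / a2) *
            P ^ ((a1 + a3) / a2 - 1)) := by
  intro χ hχ
  set A : ℝ := (k1 * k2 ^ α) ^ (1 / a2) * P ^ (1 - a1 / a2) with hA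
  set B : ℝ := fs * (k2 * k1 ^ β) ^ (1 / a2) * P ^ (a3 / a2) with hB
  set p : ℝ := a4 / a2 + 1 with hp
  set q : ℝ := φ / a2 with hq
  have hApos : 0 < A :=
    mul_pos (Real.rpow_pos_of_pos (mul_pos hk1 (Real.rpow_pos_of_pos hk2 α)) _)
      (Real.rpow_pos_of_pos hP _)
  have hBpos : 0 < B :=
    mul_pos (mul_pos hfs
      (Real.rpow_pos_of_pos (mul_pos hk2 (Real.rpow_pos_of_pos hk1 β)) _))
      (Real.rpow_pos_of_pos hP _)
  have hpne : p ≠ 0 := by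
    rw [hp]
    intro h
    apply ha42
    field_simp at h
    linarith
  have h1 : HasDerivAt (fun x : ℝ => x ^ p) (p * χ ^ (p - 1)) χ :=
    Real.hasDerivAt_rpow_const (Or.inl hχ.ne')
  have h2 : HasDerivAt (fun x : ℝ => x ^ q) (q * χ ^ (q - 1)) χ :=
    Real.hasDerivAt_rpow_const (Or.inl hχ.ne')
  have hD : HasDerivAt (fun x : ℝ => A * x ^ p - B * x ^ q)
      (A * (p * χ ^ (p - 1)) - B * (q * χ ^ (q - 1))) χ :=
    (h1.const_mul A).sub (h2.const_mul B)
  rw [hD.deriv]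
  have hχp : (0:ℝ) < χ ^ (p - 1) := Real.rpow_pos_of_pos hχ _
  have hχq : (0:ℝ) < χ ^ (q - 1) := Real.rpow_pos_of_pos hχ _
  have hdiv : χ ^ ((a4 - φ) / a2 + 1) = χ ^ (p - 1) / χ ^ (q - 1) := by
    rw [← Real.rpow_sub hχ]
    congr 1
    rw [hp, hq]; ring
  have hRHS : B * q / (A * p) =
      fs * (φ / (a4 + a2)) * ((k2 * k1 ^ β) / (k1 * k2 ^ α)) ^ (1 / a2) *
        P ^ ((a1 + a3) / a2 - 1) := by
    have hk12 : (0:ℝ) < k1 * k2 ^ α := mul_pos hk1 (Real.rpow_pos_of_pos hk2 α)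
    have hk21 : (0:ℝ) < k2 * k1 ^ β := mul_pos hk2 (Real.rpow_pos_of_pos hk1 β)
    have hkdiv : ((k2 * k1 ^ β) / (k1 * k2 ^ α)) ^ (1 / a2) =
        (k2 * k1 ^ β) ^ (1 / a2) / (k1 * k2 ^ α) ^ (1 / a2) :=
      Real.div_rpow hk21.le hk12.le _
    have hPdiv : P ^ ((a1 + a3) / a2 - 1) = P ^ (a3 / a2) / P ^ (1 - a1 / a2) := by
      rw [← Real.rpow_sub hP]
      congr 1
      field_simp; ring
    have hqp : q / p = φ / (a4 + a2) := by
      have he : a4 / a2 + 1 = (a4 + a2) / a2 := by field_simp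
      rw [hq, hp, he, div_div_div_comm, div_self ha2ne, div_one]
    rw [hkdiv, hPdiv, ← hqp, hA, hB]
    field_simp
  have hApne : A * p ≠ 0 := mul_ne_zero hApos.ne' hpne
  rw [hdiv, ← hRHS, sub_eq_zero, div_eq_div_iff hχq.ne' hApne]
  constructor <;> intro h <;> nlinarith [h]
end

section
/- Let k1, k2, f_s, φ > 0, let γ, ψ, α, β be real exponents, and set a1 = γ − αψ, a2 = 1 − αβ, a3 = ψ − γβ, a4 = αφ. Assume a2 > 0 and a4 + a2 > 0. Fix P > 0 and define π(χ) = (k1·k2^α)^{1/a2} · P^{1 − a1/a2} · χ^{a4/a2 + 1} − f_s · (k2·k1^β)^{1/a2} · P^{a3/a2} · χ^{φ/a2} for χ > 0. If χ* > 0 is a stationary point of π (i.e., π'(χ*) = 0), then the second derivative of π at χ* equals (k1·k2^α)^{1/a2} · ((a4 + a2)/a2) · P^{1 − a1/a2} · χ*^{a4/a2 − 1} · (a4 + a2 − φ)/a2; in particular π''(χ*) < 0 if and only if a4 + a2 − φ < 0. -/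
/-- at a stationary point χ* of the cloud payoff, the second
derivative equals the stated closed form; in particular it is negative iff
a4 + a2 − φ < 0. -/
theorem stmt_11 (k1 k2 fs φ P γ ψ α β a1 a2 a3 a4 : ℝ)
    (hk1 : 0 < k1) (hk2 : 0 < k2) (hfs : 0 < fs) (hφ : 0 < φ) (hP : 0 < P)
    (ha1 : a1 = γ - α * ψ) (ha2 : a2 = 1 - α * β)
    (ha3 : a3 = ψ - γ * β) (ha4 : a4 = α * φ)
    (ha2pos : 0 < a2) (ha42 : 0 < a4 + a2) :
    let cloudPayoff : ℝ → ℝ := fun x =>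
      (k1 * k2 ^ α) ^ (1 / a2) * P ^ (1 - a1 / a2) * x ^ (a4 / a2 + 1) -
        fs * (k2 * k1 ^ β) ^ (1 / a2) * P ^ (a3 / a2) * x ^ (φ / a2)
    ∀ χs : ℝ, 0 < χs → deriv cloudPayoff χs = 0 →
      deriv (deriv cloudPayoff) χs =
        (k1 * k2 ^ α) ^ (1 / a2) * ((a4 + a2) / a2) * P ^ (1 - a1 / a2) *
          χs ^ (a4 / a2 - 1) * ((a4 + a2 - φ) / a2) ∧
      (deriv (deriv cloudPayoff) χs < 0 ↔ a4 + a2 - φ < 0) := by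
  intro f χs hχ hstat
  have ha2ne : a2 ≠ 0 := ne_of_gt ha2pos
  set A : ℝ := (k1 * k2 ^ α) ^ (1 / a2) * P ^ (1 - a1 / a2) with hA
  set B : ℝ := fs * (k2 * k1 ^ β) ^ (1 / a2) * P ^ (a3 / a2) with hB
  set p : ℝ := a4 / a2 + 1 with hp
  set q : ℝ := φ / a2 with hq
  have hApos : 0 < A := by
    apply mul_pos
    · exact Real.rpow_pos_of_pos (mul_pos hk1 (Real.rpow_pos_of_pos hk2 α)) _
    · exact Real.rpow_pos_of_pos hP _
  have hBpos : 0 < B := by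
    apply mul_pos (mul_pos hfs _)
    · exact Real.rpow_pos_of_pos hP _
    · exact Real.rpow_pos_of_pos (mul_pos hk2 (Real.rpow_pos_of_pos hk1 β)) _
  -- first derivative
  have hd : ∀ x : ℝ, x ≠ 0 →
      HasDerivAt f (A * (p * x ^ (p - 1)) - B * (q * x ^ (q - 1))) x := by
    intro x hx
    have h1 := (Real.hasDerivAt_rpow_const (p := p) (Or.inl hx)).const_mul A
    have h2 := (Real.hasDerivAt_rpow_const (p := q) (Or.inl hx)).const_mul B
    have := h1.sub h2
    simpa [f, hA, hB, mul_assoc, Pi.sub_def] using this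
  have hχne : χs ≠ 0 := ne_of_gt hχ
  have hEq : deriv f =ᶠ[nhds χs]
      fun x => A * (p * x ^ (p - 1)) - B * (q * x ^ (q - 1)) := by
    filter_upwards [eventually_ne_nhds hχne] with x hx
    exact (hd x hx).deriv
  have hderiv1 : deriv f χs = A * (p * χs ^ (p - 1)) - B * (q * χs ^ (q - 1)) :=
    (hd χs hχne).deriv
  have hstat' : B * (q * χs ^ (q - 1)) = A * (p * χs ^ (p - 1)) := by
    have := hstat
    rw [hderiv1] at this
    linarith
  -- second derivative
  have hd2 : HasDerivAt (fun x => A * (p * x ^ (p - 1)) - B * (q * x ^ (q - 1)))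
      (A * p * ((p - 1) * χs ^ (p - 1 - 1)) - B * q * ((q - 1) * χs ^ (q - 1 - 1))) χs := by
    have h1 := (Real.hasDerivAt_rpow_const (p := p - 1) (x := χs) (Or.inl hχne)).const_mul (A * p)
    have h2 := (Real.hasDerivAt_rpow_const (p := q - 1) (x := χs) (Or.inl hχne)).const_mul (B * q)
    have := h1.sub h2
    simpa [mul_assoc, Pi.sub_def] using this
  have hD2 : deriv (deriv f) χs =
      A * p * ((p - 1) * χs ^ (p - 1 - 1)) - B * q * ((q - 1) * χs ^ (q - 1 - 1)) := by
    rw [Filter.EventuallyEq.deriv_eq hEq]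
    exact hd2.deriv
  -- relate χs^(q-2) to χs^(q-1)
  have hstat2 : B * q * χs ^ (q - 1 - 1) = A * p * χs ^ (p - 1 - 1) := by
    have hcancel : ∀ r : ℝ, χs ^ (r - 1) = χs ^ (r - 1 - 1) * χs := by
      intro r
      rw [← Real.rpow_add_one hχne (r - 1 - 1)]
      norm_num
    apply mul_right_cancel₀ hχne
    calc B * q * χs ^ (q - 1 - 1) * χs = B * (q * χs ^ (q - 1)) := by
          rw [hcancel q]; ring
      _ = A * (p * χs ^ (p - 1)) := hstat'
      _ = A * p * χs ^ (p - 1 - 1) * χs := by rw [hcancel p]; ring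
  have hval : deriv (deriv f) χs = A * p * χs ^ (p - 1 - 1) * (p - q) := by
    rw [hD2]; linear_combination (1 - q) * hstat2
  have hpq : p - 1 - 1 = a4 / a2 - 1 := by rw [hp]; ring
  have hpval : p = (a4 + a2) / a2 := by rw [hp]; field_simp
  have hpmq : p - q = (a4 + a2 - φ) / a2 := by rw [hp, hq]; field_simp
  constructor
  · rw [hval, hpmq, hpq, hpval, hA]; ring
  · rw [hval]
    have hfac : 0 < A * p * χs ^ (p - 1 - 1) := by
      apply mul_pos (mul_pos hApos _)
      · exact Real.rpow_pos_of_pos hχ _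
      · rw [hpval]; positivity
    rw [hpmq]
    constructor
    · intro h
      by_contra hc
      push_neg at hc
      have : 0 ≤ (a4 + a2 - φ) / a2 := div_nonneg hc ha2pos.le
      exact absurd h (not_lt.mpr (mul_nonneg hfac.le this))
    · intro h
      exact mul_neg_of_pos_of_neg hfac (div_neg_of_neg_of_pos h ha2pos)
end

section
/- Let k1, k2, f_c > 0, let χ ∈ (0,1), let γ, ψ, α, β, φ be real exponents, and set a1 = γ − αψ, a2 = 1 − αβ, a4 = αφ. Assume a2 > 0 and a1 > a2. Define D_c(P) = (k1 · k2^α · P^{−a1} · χ^{a4})^{1/a2} and π_i(P) = (P·(1−χ) − f_c) · D_c(P) for P > 0. Then π_i(P) tends to −∞ as P tends to 0 from the right, and π_i(P) tends to 0 as P tends to +∞. -/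
open Filter Real Topology

/-- the service provider payoff tends to −∞ as the price tends
to 0 from the right, and tends to 0 as the price tends to +∞. -/
theorem stmt_15 (k1 k2 fc χ γ ψ α β φ a1 a2 a4 : ℝ)
    (hk1 : 0 < k1) (hk2 : 0 < k2) (hfc : 0 < fc) (hχ : χ ∈ Set.Ioo (0 : ℝ) 1)
    (ha1 : a1 = γ - α * ψ) (ha2 : a2 = 1 - α * β) (ha4 : a4 = α * φ)
    (ha2pos : 0 < a2) (ha1a2 : a2 < a1) :
    let pi_i : ℝ → ℝ :=
      fun Q => (Q * (1 - χ) - fc) * (k1 * k2 ^ α * Q ^ (-a1) * χ ^ a4) ^ (1 / a2)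
    Filter.Tendsto pi_i (nhdsWithin 0 (Set.Ioi 0)) Filter.atBot ∧
      Filter.Tendsto pi_i Filter.atTop (nhds 0) := by
  intro pi_i
  obtain ⟨hχ0, hχ1⟩ := hχ
  set C : ℝ := k1 * k2 ^ α * χ ^ a4 with hC
  have hCpos : 0 < C := by positivity
  set K : ℝ := C ^ (1 / a2) with hK
  have hKpos : 0 < K := Real.rpow_pos_of_pos hCpos _
  have hc : 1 < a1 / a2 := (one_lt_div ha2pos).2 ha1a2
  have hcpos : 0 < a1 / a2 := lt_trans one_pos hc
  have key : ∀ Q : ℝ, 0 < Q → pi_i Q =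
      (Q * (1 - χ) - fc) * (K * Q ^ (-(a1 / a2))) := by
    intro Q hQ
    have h1 : k1 * k2 ^ α * Q ^ (-a1) * χ ^ a4 = C * Q ^ (-a1) := by ring
    simp only [pi_i, h1]
    congr 1
    rw [Real.mul_rpow hCpos.le (Real.rpow_nonneg hQ.le _),
      ← Real.rpow_mul hQ.le, show -a1 * (1 / a2) = -(a1 / a2) by ring]
  constructor
  · -- Q → 0+
    have h0 : Tendsto (fun Q : ℝ => Q * (1 - χ) - fc) (𝓝[>] 0) (𝓝 (-fc)) := by
      have : Tendsto (fun Q : ℝ => Q * (1 - χ) - fc) (𝓝 0) (𝓝 (0 * (1 - χ) - fc)) :=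
        (tendsto_id.mul_const _).sub_const _
      simpa using this.mono_left nhdsWithin_le_nhds
    have htop : Tendsto (fun Q : ℝ => K * Q ^ (-(a1 / a2))) (𝓝[>] 0) atTop := by
      apply Tendsto.const_mul_atTop hKpos
      have h1 : Tendsto (fun Q : ℝ => (Q⁻¹) ^ (a1 / a2)) (𝓝[>] 0) atTop :=
        (tendsto_rpow_atTop hcpos).comp tendsto_inv_nhdsGT_zero
      refine h1.congr' ?_
      filter_upwards [self_mem_nhdsWithin] with Q hQ
      rw [Real.inv_rpow (le_of_lt hQ), ← Real.rpow_neg (le_of_lt hQ)]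
    have := h0.neg_mul_atTop (by linarith : -fc < 0) htop
    refine this.congr' ?_
    filter_upwards [self_mem_nhdsWithin] with Q hQ
    exact (key Q hQ).symm
  · -- Q → ∞
    have e1 : Tendsto (fun Q : ℝ => K * (1 - χ) * Q ^ (1 - a1 / a2)) atTop (𝓝 0) := by
      have h1 : Tendsto (fun Q : ℝ => Q ^ (-(a1 / a2 - 1))) atTop (𝓝 0) :=
        tendsto_rpow_neg_atTop (by linarith)
      have := h1.const_mul (K * (1 - χ))
      simpa [show -(a1 / a2 - 1) = 1 - a1 / a2 by ring] using this
    have e2 : Tendsto (fun Q : ℝ => fc * K * Q ^ (-(a1 / a2))) atTop (𝓝 0) := by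
      have := (tendsto_rpow_neg_atTop hcpos).const_mul (fc * K)
      simpa using this
    have := e1.sub e2
    rw [sub_zero] at this
    refine this.congr' ?_
    filter_upwards [eventually_gt_atTop (0 : ℝ)] with Q hQ
    rw [key Q hQ]
    have hpow : Q ^ (1 - a1 / a2) = Q * Q ^ (-(a1 / a2)) := by
      rw [show (1 : ℝ) - a1 / a2 = 1 + -(a1 / a2) by ring, Real.rpow_add hQ,
        Real.rpow_one]
    rw [hpow]; ring
end
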